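/- Let r > 1 and let F be a set of permutations of {1,…,n} with |F| ≥ 2. Then opt_weak,<,r(F) < r!·ln(|F|). -/

import Mathlib

/-- `GuessForce ok V m` means: in the mistake-bound game with weak (yes/no) reinforcement
where queries have type `Q`, guesses have type `A`, and `ok q g f` says that guess `g` is a
correct answer to query `q` when the hidden target is `f`, an (adaptive) adversary whose
answers must stay consistent with some member of the current version space `V` can force
every deterministic learner to be answered "no" at least `m` times.
At each step the adversary chooses a query `q` and, depending on the learner's guess `g`,
either answers "no" (`c g = true`, one more mistake, continuing from the consistent
functions for which the guess is wrong) or answers "yes" (`c g = false`, continuing from the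
consistent functions for which the guess is correct). -/
inductive GuessForce {α Q A : Type*} (ok : Q → A → α → Prop) : Set α → ℕ → Prop where
  | zero (V : Set α) : V.Nonempty → GuessForce ok V 0
  | step (V : Set α) (m : ℕ) (q : Q) (c : A → Bool)
      (hne : ∀ g : A, (if c g then {f ∈ V | ¬ ok q g f} else {f ∈ V | ok q g f}).Nonempty)
      (h : ∀ g : A, GuessForce ok (if c g then {f ∈ V | ¬ ok q g f} else {f ∈ V | ok q g f})
        (if c g then m else m + 1)) :
      GuessForce ok V (m + 1)

/-- `opt_weak,<,r(F)`: the order model. In each round the adversary chooses `r` distinct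
inputs, and the learner guesses the permutation of `{1,…,r}` order-isomorphic to the values
of the target permutation at these inputs; weak reinforcement. -/
noncomputable def optOrder (n r : ℕ) (F : Set (Equiv.Perm (Fin n))) : ℕ :=
  sSup {m | GuessForce
    (fun (x : {x : Fin r → Fin n // Function.Injective x}) (σ : Equiv.Perm (Fin r)) f =>
      ∀ i j, σ i < σ j ↔ f (x.1 i) < f (x.1 j)) F m}

/-- For any injective tuple in a linear order there is a (unique) order-isomorphic
permutation of `Fin r`. -/
lemma exists_sort_perm {r : ℕ} {β : Type*} [LinearOrder β] (y : Fin r → β)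
    (hy : Function.Injective y) :
    ∃ σ : Equiv.Perm (Fin r), ∀ i j, σ i < σ j ↔ y i < y j := by
  classical
  set s : Finset β := Finset.univ.image y with hs
  have hcard : s.card = r := by
    rw [hs, Finset.card_image_of_injective _ hy, Finset.card_univ, Fintype.card_fin]
  let e := s.orderIsoOfFin hcard
  let y' : Fin r → s := fun i => ⟨y i, by simp [hs]⟩
  have hy' : Function.Injective y' := fun i j h => hy (congrArg Subtype.val h)
  have hbij : Function.Bijective y' :=
    (Fintype.bijective_iff_injective_and_card y').2 ⟨hy', by simp [Fintype.card_coe, hcard]⟩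
  refine ⟨(Equiv.ofBijective y' hbij).trans e.symm.toEquiv, fun i j => ?_⟩
  show e.symm (y' i) < e.symm (y' j) ↔ _
  rw [e.symm.lt_iff_lt, Subtype.mk_lt_mk]

/-- The majority-vote (halving-style) bound: if guesses cover all targets and the adversary
can force `m` mistakes from version space `V`, then `|A|^m ≤ (|A|-1)^m · |V|`. -/
lemma guessforce_bound {α Q A : Type*} [Finite α] [Fintype A] [Nonempty A]
    (ok : Q → A → α → Prop) (hcov : ∀ (q : Q) (f : α), ∃ g, ok q g f)
    {V : Set α} {m : ℕ} (h : GuessForce ok V m) :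
    Fintype.card A ^ m ≤ (Fintype.card A - 1) ^ m * V.ncard := by
  classical
  induction h with
  | zero V hne =>
    simp only [pow_zero, one_mul]; exact (Set.ncard_pos (Set.toFinite V)).2 hne
  | step V m q c hne h ih =>
    set K := Fintype.card A with hK
    have hK1 : 1 ≤ K := Fintype.card_pos
    have hVne : V.Nonempty := by
      obtain ⟨f, hf⟩ := hne (Classical.arbitrary A)
      exact ⟨f, by split at hf <;> exact hf.1⟩
    have hV1 : 1 ≤ V.ncard := (Set.ncard_pos (Set.toFinite V)).2 hVne
    have hsep : ∀ (g : A), {f ∈ V | ok q g f}.ncard + {f ∈ V | ¬ ok q g f}.ncard = V.ncard := by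
      intro g
      rw [← Set.ncard_union_eq (by
          simp only [Set.disjoint_left, Set.mem_setOf_eq]
          rintro f ⟨_, h1⟩ ⟨_, h2⟩; exact h2 h1) (Set.toFinite _) (Set.toFinite _)]
      congr 1
      ext f; by_cases hf : ok q g f <;> simp [hf]
    have hgood : ∃ g : A, V.ncard ≤ K * {f ∈ V | ok q g f}.ncard := by
      by_contra hno
      push_neg at hno
      set T := (Set.toFinite V).toFinset with hT
      have hTcoe : ∀ (p : α → Prop) [DecidablePred p],
          ((T.filter p : Finset α) : Set α) = {f ∈ V | p f} := by
        intro p _; ext f; simp [hT, Set.Finite.mem_toFinset]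
      have hcard : ∀ (p : α → Prop) [DecidablePred p],
          (T.filter p).card = {f ∈ V | p f}.ncard := by
        intro p _; rw [← hTcoe p, Set.ncard_coe_finset]
      have hsub : T ⊆ Finset.univ.biUnion (fun g => T.filter (fun f => ok q g f)) := by
        intro f hf
        obtain ⟨g, hg⟩ := hcov q f
        exact Finset.mem_biUnion.2 ⟨g, Finset.mem_univ g, Finset.mem_filter.2 ⟨hf, hg⟩⟩
      have h1 : V.ncard ≤ ∑ g : A, (T.filter (fun f => ok q g f)).card := by
        calc V.ncard = T.card := Set.ncard_eq_toFinset_card V (Set.toFinite V)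
        _ ≤ (Finset.univ.biUnion (fun g => T.filter (fun f => ok q g f))).card :=
            Finset.card_le_card hsub
        _ ≤ _ := Finset.card_biUnion_le
      have h2 : ∀ g : A, K * (T.filter (fun f => ok q g f)).card + 1 ≤ V.ncard := by
        intro g; rw [hcard]; exact hno g
      have h3 : K * ∑ g : A, (T.filter (fun f => ok q g f)).card ≤ K * (V.ncard - 1) := by
        rw [Finset.mul_sum]
        calc ∑ g : A, K * (T.filter (fun f => ok q g f)).card
            ≤ ∑ _g : A, (V.ncard - 1) := Finset.sum_le_sum (fun g _ => by have := h2 g; omega)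
          _ = K * (V.ncard - 1) := by simp [hK, mul_comm]
      have h4 : ∑ g : A, (T.filter (fun f => ok q g f)).card ≤ V.ncard - 1 :=
        Nat.le_of_mul_le_mul_left h3 hK1
      omega
    obtain ⟨g, hg⟩ := hgood
    have ihg := ih g
    have hneg := hne g
    cases hcg : c g with
    | false =>
      rw [hcg] at ihg
      simp only [Bool.false_eq_true, if_false] at ihg
      calc K ^ (m + 1) ≤ (K - 1) ^ (m + 1) * {f ∈ V | ok q g f}.ncard := ihg
        _ ≤ (K - 1) ^ (m + 1) * V.ncard := by
            exact Nat.mul_le_mul_left _ (Set.ncard_le_ncard (fun f hf => hf.1) (Set.toFinite V))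
    | true =>
      rw [hcg] at ihg
      simp only [if_true] at ihg
      have hcompl : K * {f ∈ V | ¬ ok q g f}.ncard ≤ (K - 1) * V.ncard := by
        have := hsep g
        have h5 : K * {f ∈ V | ¬ ok q g f}.ncard + V.ncard ≤ K * V.ncard := by
          calc K * {f ∈ V | ¬ ok q g f}.ncard + V.ncard
              ≤ K * {f ∈ V | ¬ ok q g f}.ncard + K * {f ∈ V | ok q g f}.ncard := by omega
            _ = K * V.ncard := by rw [← Nat.mul_add, Nat.add_comm, hsep g]
        have hKm : (K - 1) * V.ncard = K * V.ncard - V.ncard := by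
          rw [Nat.sub_mul, one_mul]
        omega
      calc K ^ (m + 1) = K * K ^ m := by ring
        _ ≤ K * ((K - 1) ^ m * {f ∈ V | ¬ ok q g f}.ncard) := Nat.mul_le_mul_left _ ihg
        _ = (K - 1) ^ m * (K * {f ∈ V | ¬ ok q g f}.ncard) := by ring
        _ ≤ (K - 1) ^ m * ((K - 1) * V.ncard) := Nat.mul_le_mul_left _ hcompl
        _ = (K - 1) ^ (m + 1) * V.ncard := by ring

/-- Let `r > 1` and let `F` be a set of permutations of `{1,…,n}` with
`|F| ≥ 2`. Then `opt_weak,<,r(F) < r!·ln |F|`. -/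
theorem stmt11 (n r : ℕ) (hr : 1 < r) (F : Set (Equiv.Perm (Fin n))) (hF : 2 ≤ F.ncard) :
    (optOrder n r F : ℝ) < (r.factorial : ℝ) * Real.log F.ncard := by
  classical
  set ok : {x : Fin r → Fin n // Function.Injective x} → Equiv.Perm (Fin r) →
      Equiv.Perm (Fin n) → Prop :=
    fun x σ f => ∀ i j, σ i < σ j ↔ f (x.1 i) < f (x.1 j) with hok
  have hcov : ∀ (q : {x : Fin r → Fin n // Function.Injective x}) (f : Equiv.Perm (Fin n)),
      ∃ g, ok q g f := fun q f => exists_sort_perm (fun i => f (q.1 i)) (f.injective.comp q.2)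
  set S : Set ℕ := {m | GuessForce ok F m} with hS
  have hopt : optOrder n r F = sSup S := rfl
  set K := r.factorial with hKdef
  have hK2 : 2 ≤ K := le_trans hr (Nat.self_le_factorial r)
  have hcardA : Fintype.card (Equiv.Perm (Fin r)) = K := by
    rw [Fintype.card_perm, Fintype.card_fin]
  set N := F.ncard with hN
  have hN1 : (1:ℝ) < (N:ℝ) := by exact_mod_cast (by omega : 1 < N)
  have hlogN : 0 < Real.log N := Real.log_pos hN1
  have hKR : (2:ℝ) ≤ (K:ℝ) := by exact_mod_cast hK2
  have hKpos : (0:ℝ) < (K:ℝ) := by linarith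
  have hKm1 : (0:ℝ) < (K:ℝ) - 1 := by linarith
  -- `log (K/(K-1)) > 1/K`
  have hlog : 1 / (K:ℝ) < Real.log ((K:ℝ) / ((K:ℝ) - 1)) := by
    have hx : -(1 / (K:ℝ)) ≠ 0 := by
      have : (0:ℝ) < 1 / (K:ℝ) := by positivity
      intro hc; rw [neg_eq_zero] at hc; linarith
    have h1 := Real.add_one_lt_exp hx
    have h1' : ((K:ℝ) - 1) / K < Real.exp (-(1 / K)) := by
      have heq : -(1 / (K:ℝ)) + 1 = ((K:ℝ) - 1) / K := by field_simp; ring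
      rw [heq] at h1; exact h1
    have h2 : Real.log (((K:ℝ) - 1) / K) < -(1 / K) := by
      have := Real.log_lt_log (by positivity) h1'
      rwa [Real.log_exp] at this
    rw [Real.log_div (ne_of_gt hKm1) (ne_of_gt hKpos)] at h2
    rw [Real.log_div (ne_of_gt hKpos) (ne_of_gt hKm1)]
    linarith
  -- every forcible mistake count is `< K · log N`
  have hbound : ∀ m ∈ S, (m:ℝ) < (K:ℝ) * Real.log N := by
    intro m hm
    have hnat := guessforce_bound ok hcov hm
    rw [hcardA] at hnat
    have hreal : ((K:ℝ)) ^ m ≤ ((K:ℝ) - 1) ^ m * N := by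
      have hc : ((K ^ m : ℕ) : ℝ) ≤ (((K - 1) ^ m * N : ℕ) : ℝ) := Nat.cast_le.2 hnat
      push_cast [Nat.cast_sub (show (1:ℕ) ≤ K by omega)] at hc
      convert hc using 2 <;> norm_num
    have hm1 : (m:ℝ) * Real.log ((K:ℝ) / ((K:ℝ) - 1)) ≤ Real.log N := by
      have hdiv : ((K:ℝ) / ((K:ℝ) - 1)) ^ m ≤ N := by
        rw [div_pow, div_le_iff₀ (by positivity), mul_comm]; exact hreal
      have hl := Real.log_le_log (by positivity) hdiv
      rwa [Real.log_pow] at hl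
    rcases Nat.eq_zero_or_pos m with hm0 | hmpos
    · subst hm0; simpa using mul_pos hKpos hlogN
    · have hmp : (0:ℝ) < (m:ℝ) := by exact_mod_cast hmpos
      have h6 : (m:ℝ) * (1 / K) < Real.log N :=
        lt_of_lt_of_le (mul_lt_mul_of_pos_left hlog hmp) hm1
      calc (m:ℝ) = (K:ℝ) * ((m:ℝ) * (1 / K)) := by field_simp
        _ < (K:ℝ) * Real.log N := by exact mul_lt_mul_of_pos_left h6 hKpos
  have hS0 : 0 ∈ S := GuessForce.zero F (Set.nonempty_of_ncard_ne_zero (by omega))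
  have hbdd : BddAbove S := ⟨⌈(K:ℝ) * Real.log N⌉₊, fun m hm =>
    le_of_lt (Nat.lt_ceil.2 (hbound m hm))⟩
  have hmem : sSup S ∈ S := Nat.sSup_mem ⟨0, hS0⟩ hbdd
  rw [hopt]
  exact hbound _ hmem
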